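/- Let hᵢ, ∇fᵢ(x), ∇fᵢ(x*) ∈ R^d be fixed vectors, U a uniform random subset of τm blocks, and h⁺ = hᵢ + (∇fᵢ(x) − hᵢ)_U. Then E‖h⁺ − ∇fᵢ(x*)‖² = (1 − τ)‖hᵢ − ∇fᵢ(x*)‖² + τ‖∇fᵢ(x) − ∇fᵢ(x*)‖². -/

import Mathlib

open Finset

/-- `x_U`: keep the coordinates of `x` lying in blocks of `U`, zero the rest. -/
noncomputable def restr {d m : ℕ} (b : Fin d → Fin m) (U : Finset (Fin m))
    (x : EuclideanSpace ℝ (Fin d)) : EuclideanSpace ℝ (Fin d) :=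
  (WithLp.equiv 2 (Fin d → ℝ)).symm (fun j => if b j ∈ U then x j else 0)

lemma count_mem_powersetCard {m k : ℕ} (hk : 0 < k) (i : Fin m) :
    ((Finset.powersetCard k (Finset.univ : Finset (Fin m))).filter (fun U => i ∈ U)).card
      = (m - 1).choose (k - 1) := by
  have : ((Finset.powersetCard k (Finset.univ : Finset (Fin m))).filter (fun U => i ∈ U)).card
      = (Finset.powersetCard (k - 1) ((Finset.univ : Finset (Fin m)).erase i)).card := by
    apply Finset.card_bij (fun U _ => U.erase i)
    · rintro U hU
      simp only [mem_filter, Finset.mem_powersetCard] at hU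
      simp only [Finset.mem_powersetCard]
      refine ⟨fun x hx => Finset.mem_erase.2 ⟨(Finset.mem_erase.1 hx).1, Finset.mem_univ _⟩, ?_⟩
      rw [Finset.card_erase_of_mem hU.2, hU.1.2]
    · rintro U hU V hV hUV
      simp only [mem_filter] at hU hV
      rw [← Finset.insert_erase hU.2, ← Finset.insert_erase hV.2, hUV]
    · rintro V hV
      simp only [Finset.mem_powersetCard] at hV
      refine ⟨insert i V, ?_, ?_⟩
      · simp only [mem_filter, Finset.mem_powersetCard]
        have hiV : i ∉ V := fun hiv => (Finset.mem_erase.1 (hV.1 hiv)).1 rfl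
        refine ⟨⟨fun x _ => Finset.mem_univ _, ?_⟩, Finset.mem_insert_self _ _⟩
        rw [Finset.card_insert_of_notMem hiV, hV.2, Nat.sub_add_cancel hk]
      · have hiV : i ∉ V := fun hiv => (Finset.mem_erase.1 (hV.1 hiv)).1 rfl
        rw [Finset.erase_insert hiV]
  rw [this, Finset.card_powersetCard, Finset.card_erase_of_mem (Finset.mem_univ i),
    Finset.card_univ, Fintype.card_fin]

/-- For fixed vectors `hᵢ`, `a = ∇fᵢ(x)`, `s = ∇fᵢ(x*)` and `U` uniform over size-`τm`
block subsets, with `h⁺ = hᵢ + (a − hᵢ)_U`, we have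
`E‖h⁺ − s‖² = (1 − τ)‖hᵢ − s‖² + τ‖a − s‖²`. -/
theorem stmt9 {d m : ℕ} (b : Fin d → Fin m) (k : ℕ) (hk : 0 < k) (hkm : k ≤ m)
    (τ : ℝ) (hτ : τ = (k : ℝ) / m)
    (h a s : EuclideanSpace ℝ (Fin d)) :
    ((m.choose k : ℝ))⁻¹ *
      ∑ U ∈ Finset.powersetCard k (Finset.univ : Finset (Fin m)),
        ‖h + restr b U (a - h) - s‖ ^ 2
      = (1 - τ) * ‖h - s‖ ^ 2 + τ * ‖a - s‖ ^ 2 := by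
  have hm : 0 < m := lt_of_lt_of_le hk hkm
  have hC : (0 : ℝ) < (m.choose k : ℝ) := by
    exact_mod_cast Nat.choose_pos hkm
  -- per-U expansion
  have key : ∀ U ∈ Finset.powersetCard k (Finset.univ : Finset (Fin m)),
      ‖h + restr b U (a - h) - s‖ ^ 2
        = ∑ j, (if b j ∈ U then (a j - s j) ^ 2 else (h j - s j) ^ 2) := by
    intro U _
    rw [EuclideanSpace.norm_eq, Real.sq_sqrt (by positivity)]
    apply Finset.sum_congr rfl
    intro j _
    have : (h + restr b U (a - h) - s) j
        = if b j ∈ U then a j - s j else h j - s j := by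
      simp only [restr, WithLp.equiv_symm_apply, PiLp.toLp_apply]
      show h j + (if b j ∈ U then (a - h) j else 0) - s j = _
      by_cases hb : b j ∈ U <;> simp [hb]
    rw [this]
    by_cases hb : b j ∈ U <;> simp [hb, Real.norm_eq_abs, sq_abs]
  rw [Finset.sum_congr rfl key, Finset.sum_comm]
  -- inner sum over U for fixed j
  have inner : ∀ j : Fin d,
      ∑ U ∈ Finset.powersetCard k (Finset.univ : Finset (Fin m)),
        (if b j ∈ U then (a j - s j) ^ 2 else (h j - s j) ^ 2)
      = ((m - 1).choose (k - 1) : ℝ) * (a j - s j) ^ 2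
        + ((m.choose k : ℝ) - ((m - 1).choose (k - 1) : ℝ)) * (h j - s j) ^ 2 := by
    intro j
    rw [Finset.sum_ite, Finset.sum_const, Finset.sum_const]
    have h1 := count_mem_powersetCard hk (b j)
    have h2 : ((Finset.powersetCard k (Finset.univ : Finset (Fin m))).filter
        (fun U => ¬ b j ∈ U)).card = m.choose k - (m - 1).choose (k - 1) := by
      rw [Finset.filter_not, Finset.card_sdiff_of_subset (Finset.filter_subset _ _), h1,
        Finset.card_powersetCard, Finset.card_univ, Fintype.card_fin]
    rw [h1, h2, nsmul_eq_mul, nsmul_eq_mul]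
    have hP : m.choose k = (m-1).choose (k-1) + (m-1).choose k := by
      obtain ⟨m', rfl⟩ := Nat.exists_eq_succ_of_ne_zero hm.ne'
      obtain ⟨k', rfl⟩ := Nat.exists_eq_succ_of_ne_zero hk.ne'
      simp [Nat.choose_succ_succ]
    have hle : (m - 1).choose (k - 1) ≤ m.choose k := by
      rw [hP]; exact Nat.le_add_right _ _
    push_cast [hle]
    ring
  rw [Finset.sum_congr rfl (fun j _ => inner j)]
  have hA : ‖a - s‖ ^ 2 = ∑ j, (a j - s j) ^ 2 := by
    rw [EuclideanSpace.norm_eq, Real.sq_sqrt (by positivity)]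
    apply Finset.sum_congr rfl
    intro j _
    have : (a - s) j = a j - s j := rfl
    rw [this, Real.norm_eq_abs, sq_abs]
  have hB : ‖h - s‖ ^ 2 = ∑ j, (h j - s j) ^ 2 := by
    rw [EuclideanSpace.norm_eq, Real.sq_sqrt (by positivity)]
    apply Finset.sum_congr rfl
    intro j _
    have : (h - s) j = h j - s j := rfl
    rw [this, Real.norm_eq_abs, sq_abs]
  have hnat : m * (m - 1).choose (k - 1) = m.choose k * k := by
    obtain ⟨m', rfl⟩ := Nat.exists_eq_succ_of_ne_zero hm.ne'
    obtain ⟨k', rfl⟩ := Nat.exists_eq_succ_of_ne_zero hk.ne'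
    simpa using Nat.add_one_mul_choose_eq m' k'
  have hC' : ((m - 1).choose (k - 1) : ℝ) = τ * (m.choose k) := by
    rw [hτ]
    have hm' : (m : ℝ) ≠ 0 := by positivity
    field_simp
    have : ((m : ℝ)) * ((m - 1).choose (k - 1) : ℝ) = ((m.choose k : ℝ)) * k := by
      exact_mod_cast hnat
    linarith [this]
  rw [Finset.sum_add_distrib, ← Finset.mul_sum, ← Finset.mul_sum, ← hA, ← hB, hC']
  field_simp
  ring
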